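/- Projection of a subgeometry is independent of the axis: with S* = V ⊕ H = V̄ ⊕ H (as 𝔽_{q^n}-vector spaces), and U = (S + H) ∩ V, Ū = (S + H) ∩ V̄ for an 𝔽_q-subspace S of S*, there exists an 𝔽_{q^n}-linear isomorphism ω : V → V̄ with ω(U) = Ū; hence the linear sets L_U ⊆ PG(V) and L_{Ū} ⊆ PG(V̄) are projectively equivalent. -/

import Mathlib

/-- Projection of a subgeometry is independent of the axis: if `S* = V ⊕ H = V̄ ⊕ H` and
`S` is an `𝔽_q`-subspace of `S*`, then there is an `𝔽_{q^n}`-linear isomorphism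
`ω : V → V̄` carrying `U = (S + H) ∩ V` onto `Ū = (S + H) ∩ V̄`; hence the linear sets
`L_U` and `L_Ū` are projectively equivalent. -/
theorem stmt_17 (q n : ℕ) (hq : IsPrimePow q)
    (Fq K S : Type*) [Field Fq] [Field K] [Algebra Fq K]
    [Fintype Fq] [Fintype K]
    (hcard_q : Fintype.card Fq = q) (hcard_K : Fintype.card K = q ^ n)
    [AddCommGroup S] [Module K S] [Module Fq S] [IsScalarTower Fq K S]
    (V V' H : Submodule K S) (h1 : IsCompl V H) (h2 : IsCompl V' H)
    (Ssub : Submodule Fq S) :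
    ∃ ω : ↥V ≃ₗ[K] ↥V', ∀ v : ↥V,
      ((v : S) ∈ Ssub ⊔ H.restrictScalars Fq ↔
        ((ω v : ↥V') : S) ∈ Ssub ⊔ H.restrictScalars Fq) := by
  set e1 := Submodule.quotientEquivOfIsCompl H V h1.symm
  set e2 := Submodule.quotientEquivOfIsCompl H V' h2.symm
  refine ⟨e1.symm.trans e2, fun v => ?_⟩
  set w := e2 (e1.symm v) with hw
  have hmk : (Submodule.Quotient.mk ((w : S)) : S ⧸ H) = Submodule.Quotient.mk (v : S) := by
    have h1' : (Submodule.Quotient.mk ((w : S)) : S ⧸ H) = e1.symm v :=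
      Submodule.mk_quotientEquivOfIsCompl_apply h2.symm (e1.symm v)
    rw [h1', Submodule.quotientEquivOfIsCompl_symm_apply]
  have hdiff : ((w : S) - (v : S)) ∈ H := (Submodule.Quotient.eq H).mp hmk
  have hmem : ((w : S) - (v : S)) ∈ Ssub ⊔ H.restrictScalars Fq :=
    Submodule.mem_sup_right hdiff
  constructor
  · intro hv
    have := Submodule.add_mem _ hmem hv
    simpa using this
  · intro hv
    have := Submodule.sub_mem _ hv hmem
    simpa [hw] using this
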